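/- Let v ∈ L²(μ; ℂ). Let w be an 𝒜-measurable function with ∫_A v dμ = ∫_A w dμ for every A ∈ 𝒜 with μ(A) < ∞ (v is integrable on such A), and let q be an 𝒜-measurable function with values in [0,∞] satisfying ∫_A |v|² dμ = ∫_A q dμ for every A ∈ 𝒜 (so w = E(v) and q = E(|v|²)). If q = |w|² μ-a.e., then v = w μ-a.e.; in particular v is then a.e. equal to an 𝒜-measurable function. -/

import Mathlib

open MeasureTheory Filter ENNReal NNReal

noncomputable section

variable {X : Type*}

/-- A set `A` in the sub-σ-algebra `m` is *admissible* for the weight `u` if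
`μ A + ∫_A |u|² dμ < ∞`. -/
def Admissible (m : MeasurableSpace X) [m0 : MeasurableSpace X] (μ : Measure X)
    (u : X → ℂ) (A : Set X) : Prop :=
  MeasurableSet[m] A ∧ μ A + ∫⁻ x in A, (‖u x‖₊ : ℝ≥0∞) ^ 2 ∂μ < ⊤

/-- `gf` is a version of `E(u·f)`, i.e. `gf` is an `m`-measurable function in `L²(μ)` with
`∫_A u·f dμ = ∫_A gf dμ` for every admissible `A`.  `f ∈ D(EM_u)` iff `f ∈ L²(μ)` and such a
`gf` exists. -/
def IsWCE (m : MeasurableSpace X) [m0 : MeasurableSpace X] (μ : Measure X)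
    (u f gf : X → ℂ) : Prop :=
  StronglyMeasurable[m] gf ∧ MemLp gf 2 μ ∧
    ∀ A : Set X, Admissible m μ u A → ∫ x in A, u x * f x ∂μ = ∫ x in A, gf x ∂μ

/-- If `v ∈ L²(μ)`, `w = E(v)` and `q = E(|v|²)` satisfy `q = |w|²` a.e.,
then `v = w` a.e.; in particular `v` is a.e. equal to an `m`-measurable function. -/
theorem stmt6 (m : MeasurableSpace X) [m0 : MeasurableSpace X] (hm : m ≤ m0)
    (μ : Measure X) [SigmaFinite μ] [SigmaFinite (μ.trim hm)]
    (v : X → ℂ) (hv : MemLp v 2 μ)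
    (w : X → ℂ) (hwm : StronglyMeasurable[m] w)
    (hw : ∀ A : Set X, MeasurableSet[m] A → μ A < ⊤ →
      ∫ x in A, v x ∂μ = ∫ x in A, w x ∂μ)
    (q : X → ℝ≥0∞) (hqm : Measurable[m] q)
    (hq : ∀ A : Set X, MeasurableSet[m] A →
      ∫⁻ x in A, (‖v x‖₊ : ℝ≥0∞) ^ 2 ∂μ = ∫⁻ x in A, q x ∂μ)
    (heq : q =ᵐ[μ] fun x => (‖w x‖₊ : ℝ≥0∞) ^ 2) :
    v =ᵐ[μ] w := by
  -- Step 1: equal L² lintegrals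
  have hint : ∫⁻ x, (‖v x‖₊ : ℝ≥0∞) ^ 2 ∂μ = ∫⁻ x, (‖w x‖₊ : ℝ≥0∞) ^ 2 ∂μ := by
    have h1 := hq Set.univ MeasurableSet.univ
    simp only [Measure.restrict_univ] at h1
    rw [h1]
    exact lintegral_congr_ae heq
  have heLp : ∀ f : X → ℂ, eLpNorm f 2 μ
      = (∫⁻ x, (‖f x‖₊ : ℝ≥0∞) ^ 2 ∂μ) ^ (1 / (2:ℝ)) := by
    intro f
    rw [eLpNorm_eq_lintegral_rpow_enorm_toReal (by norm_num) (by norm_num)]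
    simp only [ENNReal.toReal_ofNat]
    congr 1
    refine lintegral_congr fun x => ?_
    rw [show (2:ℝ) = ((2:ℕ):ℝ) by norm_num, ENNReal.rpow_natCast, enorm_eq_nnnorm]
  have heLpeq : eLpNorm v 2 μ = eLpNorm w 2 μ := by rw [heLp, heLp, hint]
  have hw2 : MemLp w 2 μ := ⟨(hwm.mono hm).aestronglyMeasurable,
    by rw [← heLpeq]; exact hv.eLpNorm_lt_top⟩
  set V : Lp ℂ 2 μ := hv.toLp v with hV
  set W : Lp ℂ 2 μ := hw2.toLp w with hW
  have hWmeas : AEStronglyMeasurable[m] (W : X → ℂ) μ := ⟨w, hwm, hw2.coeFn_toLp⟩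
  -- Step 2: condExpL2 of V equals W
  have hP : (condExpL2 ℂ ℂ hm V : Lp ℂ 2 μ) = W := by
    refine Lp.ext (f := (condExpL2 ℂ ℂ hm V : Lp ℂ 2 μ)) (g := W) ?_
    have hae : ((condExpL2 ℂ ℂ hm V : Lp ℂ 2 μ) : X → ℂ) =ᵐ[μ] w := by
      refine ae_eq_of_forall_setIntegral_eq_of_sigmaFinite' hm
        (fun s hs hμs => integrableOn_condExpL2_of_measure_ne_top hm hμs.ne V)
        (fun s hs hμs => ?_) (fun s hs hμs => ?_)
        (aestronglyMeasurable_condExpL2 hm V) ⟨w, hwm, Filter.EventuallyEq.rfl⟩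
      · haveI : IsFiniteMeasure (μ.restrict s) :=
          ⟨by rwa [Measure.restrict_apply_univ]⟩
        exact (hw2.restrict s).integrable one_le_two
      · rw [integral_condExpL2_eq hm V hs hμs.ne]
        rw [setIntegral_congr_ae (hm s hs)
          ((hv.coeFn_toLp).mono fun x hx _ => hx)]
        exact hw s hs hμs
    exact hae.trans hw2.coeFn_toLp.symm
  -- Step 3: orthogonality ⟪V - W, W⟫ = 0
  have hinner : @inner ℂ (Lp ℂ 2 μ) _ (V - W) W = 0 := by
    have h1 := inner_condExpL2_eq_inner_fun (𝕜 := ℂ) hm V W hWmeas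
    rw [hP] at h1
    rw [inner_sub_left, ← h1, sub_self]
  -- Step 4: Pythagoras gives ‖V‖² = ‖V - W‖² + ‖W‖²
  have hpyth := norm_add_sq_eq_norm_sq_add_norm_sq_of_inner_eq_zero (V - W) W hinner
  rw [sub_add_cancel] at hpyth
  have hnorm : ‖V‖ = ‖W‖ := by
    rw [hV, hW, Lp.norm_toLp, Lp.norm_toLp, heLpeq]
  rw [hnorm] at hpyth
  have hdiff : ‖V - W‖ * ‖V - W‖ = 0 := by linarith
  have hVW : V = W := sub_eq_zero.mp (norm_eq_zero.mp (mul_self_eq_zero.mp hdiff))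
  have hVw : (V : X → ℂ) =ᵐ[μ] w := by rw [hVW]; exact hw2.coeFn_toLp
  exact hv.coeFn_toLp.symm.trans hVw
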